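/- Let h : ℝ → ℝ be measurable and bounded on [0, ∞), and continuous at 0 (from the right). Then lim_{t → ∞} (1/t) ∫₀^∞ h(ω) · (1 − cos(ωt))/ω² dω = (π/2) · h(0). -/

import Mathlib

open MeasureTheory Real Filter Set



lemma kernelIntegrable : IntegrableOn (fun x : ℝ => (1 - Real.cos x) / x ^ 2) (Set.Ioi 0) := by
  have hm : Measurable fun x : ℝ => (1 - Real.cos x) / x ^ 2 :=
    ((measurable_const.sub Real.measurable_cos).div (measurable_id.pow_const 2))
  have h1 : IntegrableOn (fun x : ℝ => (1 - Real.cos x) / x ^ 2) (Set.Ioc 0 1) := by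
    refine Measure.integrableOn_of_bounded (M := 1/2) (by simp) hm.aestronglyMeasurable ?_
    filter_upwards [ae_restrict_mem measurableSet_Ioc] with x hx
    have hx0 : 0 < x := hx.1
    have hc : 1 - x ^ 2 / 2 ≤ Real.cos x := Real.one_sub_sq_div_two_le_cos
    have h0 : 0 ≤ 1 - Real.cos x := by nlinarith [Real.cos_le_one x]
    rw [Real.norm_eq_abs, abs_div, abs_of_nonneg h0, abs_of_nonneg (by positivity : (0:ℝ) ≤ x ^ 2),
      div_le_iff₀ (by positivity)]
    nlinarith
  have h2 : IntegrableOn (fun x : ℝ => (1 - Real.cos x) / x ^ 2) (Set.Ioi 1) := by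
    have hint : IntegrableOn (fun x : ℝ => 2 * x ^ (-2 : ℝ)) (Set.Ioi 1) :=
      (integrableOn_Ioi_rpow_of_lt (by norm_num) one_pos).const_mul 2
    refine hint.integrable.mono hm.aestronglyMeasurable ?_
    filter_upwards [ae_restrict_mem measurableSet_Ioi] with x hx
    have hx1 : (1:ℝ) < x := hx
    have hx0 : (0:ℝ) < x := lt_trans one_pos hx1
    have h0 : 0 ≤ 1 - Real.cos x := by nlinarith [Real.cos_le_one x]
    have h2' : 1 - Real.cos x ≤ 2 := by nlinarith [Real.neg_one_le_cos x]
    rw [Real.norm_eq_abs, Real.norm_eq_abs, abs_div, abs_of_nonneg h0,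
      abs_of_nonneg (by positivity : (0:ℝ) ≤ x ^ 2),
      abs_of_nonneg (by positivity : (0:ℝ) ≤ 2 * x ^ (-2:ℝ)),
      Real.rpow_neg hx0.le, Real.rpow_two,
      div_le_iff₀ (by positivity)]
    field_simp
    nlinarith
  have := h1.union h2
  rwa [Set.Ioc_union_Ioi_eq_Ioi (le_of_lt one_pos)] at this


lemma expcos_integral {u : ℝ} (hu : 0 < u) :
    ∫ x in Set.Ioi (0:ℝ), (1 - Real.cos x) * Real.exp (-(x * u)) = 1/u - u/(1+u^2) := by
  set F : ℝ → ℝ := fun x => -Real.exp (-(x*u))/u -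
      Real.exp (-(x*u)) * (-u * Real.cos x + Real.sin x) / (u^2+1) with hF
  have hderiv : ∀ x ∈ Set.Ici (0:ℝ),
      HasDerivAt F ((1 - Real.cos x) * Real.exp (-(x * u))) x := by
    intro x _
    have he : HasDerivAt (fun x : ℝ => Real.exp (-(x*u))) (Real.exp (-(x*u)) * (-u)) x := by
      have h1 : HasDerivAt (fun x : ℝ => -(x*u)) (-u) x := by
        simpa [Pi.neg_def] using ((hasDerivAt_id x).mul_const u).neg
      exact h1.exp
    have hs : HasDerivAt (fun x : ℝ => -u * Real.cos x + Real.sin x)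
        (-u * (-Real.sin x) + Real.cos x) x :=
      ((Real.hasDerivAt_cos x).const_mul (-u)).add (Real.hasDerivAt_sin x)
    have : HasDerivAt F _ x := ((he.neg.div_const u).sub ((he.mul hs).div_const (u^2+1)))
    convert this using 1
    have h2 : u^2 + 1 ≠ 0 := by positivity
    field_simp
    ring
  have hint : IntegrableOn (fun x => (1 - Real.cos x) * Real.exp (-(x * u))) (Set.Ioi 0) := by
    have h2 : IntegrableOn (fun x : ℝ => 2 * Real.exp (-u * x)) (Set.Ioi 0) :=
      (exp_neg_integrableOn_Ioi 0 hu).const_mul 2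
    refine h2.integrable.mono ?_ ?_
    · exact ((measurable_const.sub Real.measurable_cos).mul
        ((measurable_id.mul_const u).neg.exp)).aestronglyMeasurable
    · filter_upwards [] with x
      have h0 : 0 ≤ 1 - Real.cos x := by nlinarith [Real.cos_le_one x]
      have h2' : 1 - Real.cos x ≤ 2 := by nlinarith [Real.neg_one_le_cos x]
      have hexp : (0:ℝ) < Real.exp (-(x*u)) := Real.exp_pos _
      rw [Real.norm_eq_abs, Real.norm_eq_abs, abs_mul, abs_of_nonneg h0,
        abs_of_nonneg hexp.le, abs_of_nonneg (by positivity : (0:ℝ) ≤ 2 * Real.exp (-u*x)),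
        show -u*x = -(x*u) by ring]
      nlinarith
  have htend : Tendsto F atTop (nhds 0) := by
    have hexp : Tendsto (fun x : ℝ => Real.exp (-(x*u))) atTop (nhds 0) := by
      have : Tendsto (fun x : ℝ => -(x*u)) atTop atBot :=
        tendsto_neg_atTop_atBot.comp (tendsto_id.atTop_mul_const hu)
      exact Real.tendsto_exp_atBot.comp this
    have hb : ∀ x : ℝ, ‖F x‖ ≤ (1/u + (u+1)/(u^2+1)) * Real.exp (-(x*u)) := by
      intro x
      have h1 : |(-u * Real.cos x + Real.sin x)| ≤ u + 1 := by
        have := abs_add_le (-u * Real.cos x) (Real.sin x)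
        have h2 := Real.abs_cos_le_one x
        have h3 := Real.abs_sin_le_one x
        have h4 : |(-u * Real.cos x)| = u * |Real.cos x| := by
          rw [abs_mul, abs_neg, abs_of_pos hu]
        nlinarith
      have hexp : (0:ℝ) < Real.exp (-(x*u)) := Real.exp_pos _
      have h5 : (0:ℝ) < u^2 + 1 := by positivity
      rw [hF]
      simp only [Real.norm_eq_abs]
      calc |(-Real.exp (-(x*u))/u - Real.exp (-(x*u)) * (-u * Real.cos x + Real.sin x) / (u^2+1))|
          ≤ |(-Real.exp (-(x*u))/u)| + |(Real.exp (-(x*u)) * (-u * Real.cos x + Real.sin x) / (u^2+1))| :=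
            abs_sub _ _
        _ ≤ (1/u + (u+1)/(u^2+1)) * Real.exp (-(x*u)) := by
            rw [abs_div, abs_div, abs_neg, abs_of_nonneg hexp.le, abs_of_pos hu,
              abs_of_pos h5, abs_mul, abs_of_nonneg hexp.le]
            calc Real.exp (-(x*u))/u + Real.exp (-(x*u)) * |(-u * Real.cos x + Real.sin x)| / (u^2+1)
                ≤ Real.exp (-(x*u))/u + Real.exp (-(x*u)) * (u+1) / (u^2+1) := by
                  gcongr
              _ = (1/u + (u+1)/(u^2+1)) * Real.exp (-(x*u)) := by ring
    have := squeeze_zero_norm hb (by simpa using hexp.const_mul (1/u + (u+1)/(u^2+1)))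
    exact this
  have := integral_Ioi_of_hasDerivAt_of_tendsto' hderiv hint htend
  rw [this, hF]
  have h2 : u^2 + 1 ≠ 0 := by positivity
  simp only [zero_mul, mul_zero, Real.exp_zero, Real.cos_zero, Real.sin_zero, neg_zero]
  field_simp
  ring


lemma gammaB {x : ℝ} (hx : 0 < x) :
    ∫ u in Set.Ioi (0:ℝ), u * Real.exp (-(x * u)) = 1 / x ^ 2 := by
  have := Real.integral_rpow_mul_exp_neg_mul_Ioi (a := 2) (r := x) two_pos hx
  rw [Real.Gamma_two, mul_one] at this
  have heq : ∀ u ∈ Set.Ioi (0:ℝ), u ^ ((2:ℝ) - 1) * Real.exp (-(x * u)) =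
      u * Real.exp (-(x * u)) := by
    intro u hu
    norm_num [Real.rpow_one]
  rw [setIntegral_congr_fun measurableSet_Ioi heq] at this
  rw [this]
  rw [show ((2:ℝ)) = ((2:ℕ):ℝ) by norm_num, Real.rpow_natCast]
  rw [div_pow, one_pow]

lemma uexp_integrable {x : ℝ} (hx : 0 < x) :
    IntegrableOn (fun u : ℝ => u * Real.exp (-(x * u))) (Set.Ioi 0) := by
  have := integrableOn_rpow_mul_exp_neg_mul_rpow (p := 1) (s := 1) (b := x)
    (by norm_num) one_pos hx
  refine this.congr_fun (fun u hu => ?_) measurableSet_Ioi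
  simp [Real.rpow_one, neg_mul]

lemma keyIntegral : ∫ x in Set.Ioi (0:ℝ), (1 - Real.cos x) / x ^ 2 = Real.pi / 2 := by
  set μ := volume.restrict (Set.Ioi (0:ℝ)) with hμ
  set f : ℝ → ℝ → ℝ := fun x u => (1 - Real.cos x) * (u * Real.exp (-(x * u))) with hf
  have hfm : AEStronglyMeasurable (Function.uncurry f) (μ.prod μ) := by
    apply Measurable.aestronglyMeasurable
    unfold Function.uncurry
    fun_prop
  have hae : ∀ᵐ x ∂μ, ∫ u, f x u ∂μ = (1 - Real.cos x) / x ^ 2 := by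
    filter_upwards [ae_restrict_mem measurableSet_Ioi] with x hx
    have hx' : (0:ℝ) < x := hx
    rw [hf]
    simp only []
    rw [integral_const_mul, hμ, gammaB hx']
    field_simp
  have haeint : ∀ᵐ x ∂μ, Integrable (f x) μ := by
    filter_upwards [ae_restrict_mem measurableSet_Ioi] with x hx
    exact (uexp_integrable hx).const_mul _
  have hnorm : ∀ᵐ x ∂μ, ∫ u, ‖f x u‖ ∂μ = (1 - Real.cos x) / x ^ 2 := by
    filter_upwards [ae_restrict_mem measurableSet_Ioi, hae] with x hx hae'
    have h0 : 0 ≤ 1 - Real.cos x := by nlinarith [Real.cos_le_one x]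
    have hnn : ∀ᵐ u ∂μ, ‖f x u‖ = f x u := by
      filter_upwards [ae_restrict_mem measurableSet_Ioi] with u hu
      have hu' : (0:ℝ) < u := hu
      have : 0 ≤ f x u := by
        rw [hf]
        have := (Real.exp_pos (-(x*u))).le
        positivity
      exact Real.norm_of_nonneg this
    rw [integral_congr_ae hnn, hae']
  have hint : Integrable (Function.uncurry f) (μ.prod μ) := by
    rw [integrable_prod_iff hfm]
    refine ⟨haeint, ?_⟩
    exact kernelIntegrable.congr (hnorm.mono fun x hx => hx.symm)
  have hswap := integral_integral_swap (f := f) hint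
  have hLHS : ∫ x, ∫ u, f x u ∂μ ∂μ = ∫ x in Set.Ioi (0:ℝ), (1 - Real.cos x) / x ^ 2 :=
    integral_congr_ae hae
  have hRHS : ∫ u, ∫ x, f x u ∂μ ∂μ = Real.pi / 2 := by
    have hae2 : ∀ᵐ u ∂μ, ∫ x, f x u ∂μ = (1 + u^2)⁻¹ := by
      filter_upwards [ae_restrict_mem measurableSet_Ioi] with u hu
      have hu' : (0:ℝ) < u := hu
      have : ∫ x, f x u ∂μ = ∫ x in Set.Ioi (0:ℝ), ((1 - Real.cos x) * Real.exp (-(x * u))) * u := by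
        rw [hμ]
        congr 1
        ext x
        rw [hf]
        ring
      rw [this, integral_mul_const, expcos_integral hu']
      have h1 : (1:ℝ) + u^2 ≠ 0 := by positivity
      field_simp
      ring
    rw [integral_congr_ae hae2, hμ, integral_Ioi_inv_one_add_sq, Real.arctan_zero, sub_zero]
  rw [← hLHS, hswap, hRHS]

/-- If `h : ℝ → ℝ` is measurable and bounded on `[0,∞)` and continuous at `0` from the
right, then `(1/t) ∫₀^∞ h(ω)(1 − cos(ωt))/ω² dω → (π/2) h(0)` as `t → ∞`. -/
theorem stmt5 (h : ℝ → ℝ) (hmeas : Measurable h)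
    (hbdd : ∃ C : ℝ, ∀ ω ∈ Set.Ici (0:ℝ), |h ω| ≤ C)
    (hcont : ContinuousWithinAt h (Set.Ici 0) 0) :
    Filter.Tendsto
      (fun t : ℝ => (1/t) * ∫ ω in Set.Ioi (0:ℝ), h ω * (1 - Real.cos (ω * t)) / ω ^ 2)
      Filter.atTop (nhds (Real.pi / 2 * h 0)) := by
  obtain ⟨C, hC⟩ := hbdd
  have hkm : Measurable fun u : ℝ => (1 - Real.cos u) / u ^ 2 :=
    (measurable_const.sub Real.measurable_cos).div (measurable_id.pow_const 2)
  have hDCT : Filter.Tendsto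
      (fun t : ℝ => ∫ u in Set.Ioi (0:ℝ), h (u/t) * ((1 - Real.cos u) / u ^ 2))
      Filter.atTop
      (nhds (∫ u in Set.Ioi (0:ℝ), h 0 * ((1 - Real.cos u) / u ^ 2))) := by
    apply tendsto_integral_filter_of_dominated_convergence
      (bound := fun u => C * ((1 - Real.cos u) / u ^ 2))
    · filter_upwards [] with t
      exact ((hmeas.comp (measurable_id.div_const t)).mul hkm).aestronglyMeasurable
    · filter_upwards [eventually_gt_atTop 0] with t ht
      filter_upwards [ae_restrict_mem measurableSet_Ioi] with u hu
      have hu' : (0:ℝ) < u := hu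
      have hmem : u / t ∈ Set.Ici (0:ℝ) := le_of_lt (div_pos hu' ht)
      have h0 : 0 ≤ (1 - Real.cos u) / u ^ 2 := by
        have := Real.cos_le_one u
        have h1 : 0 ≤ 1 - Real.cos u := by linarith
        positivity
      rw [Real.norm_eq_abs, abs_mul, abs_of_nonneg h0]
      exact mul_le_mul_of_nonneg_right (hC _ hmem) h0
    · exact (kernelIntegrable.const_mul C)
    · filter_upwards [ae_restrict_mem measurableSet_Ioi] with u hu
      have hu' : (0:ℝ) < u := hu
      have h1 : Filter.Tendsto (fun t : ℝ => u / t) Filter.atTop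
          (nhdsWithin 0 (Set.Ici 0)) := by
        rw [tendsto_nhdsWithin_iff]
        refine ⟨tendsto_const_nhds.div_atTop tendsto_id, ?_⟩
        filter_upwards [eventually_gt_atTop 0] with t ht
        exact le_of_lt (div_pos hu' ht)
      exact (hcont.tendsto.comp h1).mul_const _
  have hval : ∫ u in Set.Ioi (0:ℝ), h 0 * ((1 - Real.cos u) / u ^ 2)
      = Real.pi / 2 * h 0 := by
    rw [integral_const_mul, keyIntegral]
    ring
  rw [hval] at hDCT
  apply hDCT.congr'
  filter_upwards [eventually_gt_atTop 0] with t ht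
  set g : ℝ → ℝ := fun u => h (u/t) * ((1 - Real.cos u) / u ^ 2) with hg
  have key := integral_comp_mul_right_Ioi g 0 ht
  rw [zero_mul] at key
  have hcong : ∀ ω ∈ Set.Ioi (0:ℝ),
      g (ω * t) = (1/t^2) * (h ω * (1 - Real.cos (ω * t)) / ω ^ 2) := by
    intro ω hω
    have hω' : (0:ℝ) < ω := hω
    rw [hg]
    simp only []
    rw [mul_div_cancel_right₀ _ ht.ne', mul_pow]
    field_simp
  calc ∫ u in Set.Ioi (0:ℝ), g u
      = t • ∫ ω in Set.Ioi (0:ℝ), g (ω * t) := by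
        rw [key, smul_smul, mul_inv_cancel₀ ht.ne', one_smul]
    _ = t * ∫ ω in Set.Ioi (0:ℝ), (1/t^2) * (h ω * (1 - Real.cos (ω * t)) / ω ^ 2) := by
        rw [smul_eq_mul]
        congr 1
        exact setIntegral_congr_fun measurableSet_Ioi hcong
    _ = (1/t) * ∫ ω in Set.Ioi (0:ℝ), h ω * (1 - Real.cos (ω * t)) / ω ^ 2 := by
        rw [integral_const_mul]
        field_simp
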